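/- Let $(X_0, \Delta_0)$ be a log Fano pair over a field of characteristic 0 and let $(X, \Delta + X_0) \to C$ be a plt extension over the spectrum of a DVR with $\mathrm{lct}(X, \Delta + X_0; D) = \mathrm{lct}(X_0, \Delta_0; D|_{X_0})$ for all relative $m$-basis type divisors $D$ (inversion of adjunction), and such that every $m$-basis type divisor of $L_0$ lifts to a relative $m$-basis type divisor of $L$. Then for every $m$ divisible by $r$, $\delta_m(X, \Delta + X_0; L) = \delta_m(X_0, \Delta_0; L_0)$, and consequently $\delta(X, \Delta + X_0; L) = \delta(X_0, \Delta_0; L_0)$. -/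
import Mathlib

open Filter

theorem stmt16 (𝒟 𝒟₀ : ℕ → Type*) [∀ m, Nonempty (𝒟 m)] [∀ m, Nonempty (𝒟₀ m)]
    (lct : ∀ m, 𝒟 m → ℝ) (lct₀ : ∀ m, 𝒟₀ m → ℝ)
    (res : ∀ m, 𝒟 m → 𝒟₀ m)
    -- inversion of adjunction for basis type divisors
    (hadj : ∀ (m : ℕ) (D : 𝒟 m), lct m D = lct₀ m (res m D))
    -- every m-basis type divisor of L₀ lifts
    (hlift : ∀ m : ℕ, Function.Surjective (res m))
    (r : ℕ) (hr : 0 < r) :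
    (∀ m : ℕ, (⨅ D : 𝒟 m, lct m D) = ⨅ D₀ : 𝒟₀ m, lct₀ m D₀) ∧
    Filter.limsup (fun m : ℕ => ⨅ D : 𝒟 (r * m), lct (r * m) D) atTop
      = Filter.limsup (fun m : ℕ => ⨅ D₀ : 𝒟₀ (r * m), lct₀ (r * m) D₀) atTop := by
  have key : ∀ m : ℕ, (⨅ D : 𝒟 m, lct m D) = ⨅ D₀ : 𝒟₀ m, lct₀ m D₀ := by
    intro m
    calc (⨅ D : 𝒟 m, lct m D) = ⨅ D : 𝒟 m, lct₀ m (res m D) := by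
          exact iInf_congr (hadj m)
      _ = ⨅ D₀ : 𝒟₀ m, lct₀ m D₀ := (hlift m).iInf_comp (lct₀ m)
  exact ⟨key, by simp only [key]⟩
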